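/- Let 0 < s < 1 and A ≥ 1, and let f with Fourier support in {2j ≠ ±k} and finite ‖f‖_{E^s}. Then the low-frequency part f_{1,A} = Σ_{2j≠±k, 2|j|+|k| ≤ A} f̂(j,k) e^{2ijx+ikt} satisfies the pointwise bound ‖f_{1,A}‖_{C⁰} ≤ C(s) ‖f‖_{E^s} A^{1−s}. -/

import Mathlib

lemma stmt19_aux1 (s : ℝ) (hs0 : 0 < s) (hs1 : s < 1) (N : ℕ) :
    ∑ i ∈ Finset.range N, ((i : ℝ) + 1) ^ (-s) ≤ (N : ℝ) ^ (1 - s) / (1 - s) := by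
  have hp : (0:ℝ) < 1 - s := by linarith
  rw [le_div_iff₀ hp]
  have key : ∀ i ∈ Finset.range N, ((i:ℝ)+1) ^ (-s) * (1-s) ≤
      (((i+1:ℕ)):ℝ) ^ (1-s) - ((i:ℕ):ℝ) ^ (1-s) := by
    intro i _
    have hm : (0:ℝ) ≤ (i:ℝ) := Nat.cast_nonneg i
    have hm1 : (0:ℝ) < (i:ℝ) + 1 := by linarith
    have hb : (1 + -(1/((i:ℝ)+1))) ^ (1-s) ≤ 1 + (1-s) * -(1/((i:ℝ)+1)) :=
      rpow_one_add_le_one_add_mul_self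
        (by rw [neg_le, neg_neg]; exact (div_le_one hm1).mpr (by linarith)) hp.le (by linarith)
    have h1 : (1 + -(1/((i:ℝ)+1))) = (i:ℝ)/((i:ℝ)+1) := by field_simp; ring
    rw [h1] at hb
    have h2 := mul_le_mul_of_nonneg_right hb (Real.rpow_pos_of_pos hm1 (1-s)).le
    rw [← Real.mul_rpow (div_nonneg hm hm1.le) hm1.le, div_mul_cancel₀ _ hm1.ne'] at h2
    have h3 : ((i:ℝ)+1) ^ (-s) * ((i:ℝ)+1) = ((i:ℝ)+1) ^ (1-s) := by
      rw [← Real.rpow_add_one hm1.ne']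
      ring_nf
    have h4 : (1/((i:ℝ)+1)) * (((i:ℝ)+1) ^ (1-s)) = ((i:ℝ)+1) ^ (-s) := by
      field_simp
      linarith [h3]
    have h5 : (1 + (1 - s) * -(1/((i:ℝ)+1))) * (((i:ℝ)+1) ^ (1-s)) =
        ((i:ℝ)+1) ^ (1-s) - (1-s) * (((i:ℝ)+1) ^ (-s)) := by
      rw [← h4]; ring
    push_cast
    linarith [h2, h5]
  calc (∑ i ∈ Finset.range N, ((i:ℝ)+1) ^ (-s)) * (1-s)
      = ∑ i ∈ Finset.range N, ((i:ℝ)+1) ^ (-s) * (1-s) := by rw [Finset.sum_mul]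
    _ ≤ ∑ i ∈ Finset.range N, ((((i+1:ℕ)):ℝ) ^ (1-s) - ((i:ℕ):ℝ) ^ (1-s)) :=
        Finset.sum_le_sum key
    _ = ((N:ℕ):ℝ) ^ (1-s) - ((0:ℕ):ℝ) ^ (1-s) :=
        Finset.sum_range_sub (fun i : ℕ => ((i:ℕ):ℝ) ^ (1-s)) N
    _ = (N:ℝ) ^ (1-s) := by
        rw [Nat.cast_zero, Real.zero_rpow hp.ne']; ring

lemma stmt19_aux2 (s : ℝ) (hs0 : 0 < s) (hs1 : s < 1) (N : ℕ) :
    ∑ a ∈ (Finset.Icc (-(N:ℤ)) (N:ℤ)).erase 0, |(a:ℝ)| ^ (-s) ≤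
      2 * ((N : ℝ) ^ (1 - s) / (1 - s)) := by
  have hval : ∀ i : ℕ, |(((i:ℤ)+1 : ℤ) : ℝ)| ^ (-s) = ((i:ℝ)+1) ^ (-s) := by
    intro i
    have : (((i:ℤ)+1 : ℤ) : ℝ) = (i:ℝ)+1 := by push_cast; ring
    rw [this, abs_of_nonneg (by positivity)]
  have hvaln : ∀ i : ℕ, |((-(i:ℤ)-1 : ℤ) : ℝ)| ^ (-s) = ((i:ℝ)+1) ^ (-s) := by
    intro i
    have : ((-(i:ℤ)-1 : ℤ) : ℝ) = -((i:ℝ)+1) := by push_cast; ring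
    rw [this, abs_neg, abs_of_nonneg (by positivity)]
  have hQ : Finset.Icc (1:ℤ) (N:ℤ) =
      Finset.map ⟨fun i : ℕ => (i:ℤ)+1, by
        have hinj : Function.Injective (fun i : ℕ => (i:ℤ)+1) := fun a b h => by simp only at h; omega
        exact hinj⟩ (Finset.range N) := by
    ext a
    simp only [Finset.mem_Icc, Finset.mem_map, Finset.mem_range, Function.Embedding.coeFn_mk]
    constructor
    · rintro ⟨h1, h2⟩; exact ⟨(a-1).toNat, by omega, by omega⟩
    · rintro ⟨i, hi, rfl⟩; omega
  have hP : Finset.Icc (-(N:ℤ)) (-1 : ℤ) =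
      Finset.map ⟨fun i : ℕ => -(i:ℤ)-1, by
        have hinj : Function.Injective (fun i : ℕ => -(i:ℤ)-1) := fun a b h => by simp only at h; omega
        exact hinj⟩ (Finset.range N) := by
    ext a
    simp only [Finset.mem_Icc, Finset.mem_map, Finset.mem_range, Function.Embedding.coeFn_mk]
    constructor
    · rintro ⟨h1, h2⟩; exact ⟨(-a-1).toNat, by omega, by omega⟩
    · rintro ⟨i, hi, rfl⟩; omega
  have hsub : (Finset.Icc (-(N:ℤ)) (N:ℤ)).erase 0 ⊆
      Finset.Icc (-(N:ℤ)) (-1 : ℤ) ∪ Finset.Icc (1:ℤ) (N:ℤ) := by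
    intro a ha
    simp only [Finset.mem_erase, Finset.mem_Icc] at ha
    simp only [Finset.mem_union, Finset.mem_Icc]
    omega
  have hdisj : Disjoint (Finset.Icc (-(N:ℤ)) (-1 : ℤ)) (Finset.Icc (1:ℤ) (N:ℤ)) := by
    rw [Finset.disjoint_left]
    intro a ha hb
    simp only [Finset.mem_Icc] at ha hb
    omega
  calc ∑ a ∈ (Finset.Icc (-(N:ℤ)) (N:ℤ)).erase 0, |(a:ℝ)| ^ (-s)
      ≤ ∑ a ∈ Finset.Icc (-(N:ℤ)) (-1 : ℤ) ∪ Finset.Icc (1:ℤ) (N:ℤ), |(a:ℝ)| ^ (-s) :=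
        Finset.sum_le_sum_of_subset_of_nonneg hsub (fun a _ _ => by positivity)
    _ = (∑ a ∈ Finset.Icc (-(N:ℤ)) (-1 : ℤ), |(a:ℝ)| ^ (-s))
        + ∑ a ∈ Finset.Icc (1:ℤ) (N:ℤ), |(a:ℝ)| ^ (-s) := Finset.sum_union hdisj
    _ = (∑ i ∈ Finset.range N, ((i:ℝ)+1) ^ (-s))
        + ∑ i ∈ Finset.range N, ((i:ℝ)+1) ^ (-s) := by
        rw [hP, hQ, Finset.sum_map, Finset.sum_map]
        simp only [Function.Embedding.coeFn_mk]
        rw [Finset.sum_congr rfl (fun i _ => hvaln i), Finset.sum_congr rfl (fun i _ => hval i)]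
    _ ≤ (N : ℝ) ^ (1-s) / (1-s) + (N : ℝ) ^ (1-s) / (1-s) := by
        have := stmt19_aux1 s hs0 hs1 N
        linarith
    _ = 2 * ((N : ℝ) ^ (1 - s) / (1 - s)) := by ring


set_option maxHeartbeats 1000000 in
/-- Pointwise bound on the low-frequency part: for 0 < s < 1 there is C(s) with
‖f_{1,A}‖_{C⁰} ≤ C(s)·‖f‖_{E^s}·A^{1−s} for all A ≥ 1, where
f_{1,A} = Σ_{2j≠±k, 2|j|+|k| ≤ A} f̂(j,k)e^{2ijx+ikt}. -/
theorem stmt19 (s : ℝ) (hs0 : 0 < s) (hs1 : s < 1) :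
    ∃ C : ℝ, 0 < C ∧ ∀ A : ℝ, 1 ≤ A → ∀ (fhat : ℤ × ℤ → ℂ),
      (∀ jk : ℤ × ℤ, (2 * jk.1 = jk.2 ∨ 2 * jk.1 = -jk.2) → fhat jk = 0) →
      Summable (fun jk : ℤ × ℤ =>
        ((|4 * jk.1 ^ 2 - jk.2 ^ 2| : ℤ) : ℝ) ^ s * ‖fhat jk‖ ^ 2) →
      ∀ x t : ℝ,
        ‖∑' jk : ℤ × ℤ, (if ((2 * |jk.1| + |jk.2| : ℤ) : ℝ) ≤ A then fhat jk else 0) *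
            Complex.exp (Complex.I * ((2 * (jk.1 : ℝ) * x + (jk.2 : ℝ) * t : ℝ) : ℂ))‖ ≤
          C * (∑' jk : ℤ × ℤ,
            ((|4 * jk.1 ^ 2 - jk.2 ^ 2| : ℤ) : ℝ) ^ s * ‖fhat jk‖ ^ 2) ^ (1 / 2 : ℝ) *
            A ^ (1 - s) := by
  classical
  have hp : (0:ℝ) < 1 - s := by linarith
  refine ⟨2/(1-s), by positivity, ?_⟩
  intro A hA fhat hvan hsum x t
  have hA0 : (0:ℝ) < A := by linarith
  set N : ℤ := ⌊A⌋ with hNdef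
  have hN1 : (1:ℤ) ≤ N := by rw [hNdef, Int.le_floor]; exact_mod_cast hA
  have hNA : (N:ℝ) ≤ A := Int.floor_le A
  set M : ℕ := N.toNat with hMdef
  have hMN : (M:ℤ) = N := Int.toNat_of_nonneg (by omega)
  set w : ℤ × ℤ → ℝ := fun jk => ((|4 * jk.1 ^ 2 - jk.2 ^ 2| : ℤ) : ℝ) with hw
  set E : ℝ := ∑' jk : ℤ × ℤ, w jk ^ s * ‖fhat jk‖ ^ 2 with hE
  have hE0 : 0 ≤ E := tsum_nonneg (fun jk => by positivity)
  set T : Finset (ℤ × ℤ) := Finset.Icc (-N, -N) (N, N) with hT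
  have hcond : ∀ jk : ℤ × ℤ, ((2 * |jk.1| + |jk.2| : ℤ) : ℝ) ≤ A →
      2 * |jk.1| + |jk.2| ≤ N := fun jk h => by rw [hNdef]; exact Int.le_floor.mpr h
  have h0 : ∀ jk : ℤ × ℤ, jk ∉ T →
      (if ((2 * |jk.1| + |jk.2| : ℤ) : ℝ) ≤ A then fhat jk else 0) *
        Complex.exp (Complex.I * ((2 * (jk.1 : ℝ) * x + (jk.2 : ℝ) * t : ℝ) : ℂ)) = 0 := by
    intro jk hjk
    by_cases hc : ((2 * |jk.1| + |jk.2| : ℤ) : ℝ) ≤ A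
    · exfalso
      apply hjk
      have hle := hcond jk hc
      have ha : |jk.1| ≤ N := by linarith [abs_nonneg jk.1, abs_nonneg jk.2]
      have hb : |jk.2| ≤ N := by linarith [abs_nonneg jk.1]
      rw [hT, Finset.mem_Icc, Prod.le_def, Prod.le_def]
      exact ⟨⟨(abs_le.mp ha).1, (abs_le.mp hb).1⟩, ⟨(abs_le.mp ha).2, (abs_le.mp hb).2⟩⟩
    · rw [if_neg hc, zero_mul]
  rw [tsum_eq_sum h0]
  -- norms of terms
  have hnorm : ∀ jk : ℤ × ℤ,
      ‖(if ((2 * |jk.1| + |jk.2| : ℤ) : ℝ) ≤ A then fhat jk else 0) *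
        Complex.exp (Complex.I * ((2 * (jk.1 : ℝ) * x + (jk.2 : ℝ) * t : ℝ) : ℂ))‖ =
      (if ((2 * |jk.1| + |jk.2| : ℤ) : ℝ) ≤ A then ‖fhat jk‖ else 0) := by
    intro jk
    rw [norm_mul]
    have hexp : ‖Complex.exp (Complex.I *
        ((2 * (jk.1 : ℝ) * x + (jk.2 : ℝ) * t : ℝ) : ℂ))‖ = 1 := by
      rw [Complex.norm_exp]
      simp [Complex.mul_re]
    rw [hexp, mul_one, apply_ite norm, norm_zero]
  set S : Finset (ℤ × ℤ) :=
    (T.filter (fun jk => ((2 * |jk.1| + |jk.2| : ℤ) : ℝ) ≤ A)).filter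
      (fun jk => ¬(2 * jk.1 = jk.2 ∨ 2 * jk.1 = -jk.2)) with hS
  have hstep1 : ‖∑ jk ∈ T,
      (if ((2 * |jk.1| + |jk.2| : ℤ) : ℝ) ≤ A then fhat jk else 0) *
        Complex.exp (Complex.I * ((2 * (jk.1 : ℝ) * x + (jk.2 : ℝ) * t : ℝ) : ℂ))‖ ≤
      ∑ jk ∈ S, ‖fhat jk‖ := by
    calc ‖∑ jk ∈ T,
        (if ((2 * |jk.1| + |jk.2| : ℤ) : ℝ) ≤ A then fhat jk else 0) *
          Complex.exp (Complex.I * ((2 * (jk.1 : ℝ) * x + (jk.2 : ℝ) * t : ℝ) : ℂ))‖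
        ≤ ∑ jk ∈ T, ‖(if ((2 * |jk.1| + |jk.2| : ℤ) : ℝ) ≤ A then fhat jk else 0) *
            Complex.exp (Complex.I * ((2 * (jk.1 : ℝ) * x + (jk.2 : ℝ) * t : ℝ) : ℂ))‖ :=
          norm_sum_le _ _
      _ = ∑ jk ∈ T, (if ((2 * |jk.1| + |jk.2| : ℤ) : ℝ) ≤ A then ‖fhat jk‖ else 0) :=
          Finset.sum_congr rfl (fun jk _ => hnorm jk)
      _ = ∑ jk ∈ T.filter (fun jk => ((2 * |jk.1| + |jk.2| : ℤ) : ℝ) ≤ A), ‖fhat jk‖ :=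
          (Finset.sum_filter _ _).symm
      _ = ∑ jk ∈ S, ‖fhat jk‖ := by
          rw [hS]
          refine (Finset.sum_filter_of_ne ?_).symm
          intro jk _ hne hQ
          exact hne (by rw [hvan jk hQ, norm_zero])
  -- positivity of weights on S
  have hwpos : ∀ jk ∈ S, (1:ℝ) ≤ w jk := by
    intro jk hjk
    rw [hS, Finset.mem_filter] at hjk
    have hne : ¬(2 * jk.1 = jk.2 ∨ 2 * jk.1 = -jk.2) := hjk.2
    have hz : 4 * jk.1 ^ 2 - jk.2 ^ 2 ≠ 0 := by
      intro h
      have h2 : (2 * jk.1 - jk.2) * (2 * jk.1 + jk.2) = 0 := by linear_combination h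
      rcases mul_eq_zero.mp h2 with h3 | h3
      · exact hne (Or.inl (by omega))
      · exact hne (Or.inr (by omega))
    have : (1:ℤ) ≤ |4 * jk.1 ^ 2 - jk.2 ^ 2| := Int.one_le_abs hz
    show (1:ℝ) ≤ ((|4 * jk.1 ^ 2 - jk.2 ^ 2| : ℤ) : ℝ)
    exact_mod_cast this
  -- Cauchy-Schwarz
  have hCS := Finset.sum_sq_le_sum_mul_sum_of_sq_eq_mul S
    (r := fun jk => ‖fhat jk‖)
    (f := fun jk => (w jk) ^ (-s))
    (g := fun jk => (w jk) ^ s * ‖fhat jk‖ ^ 2)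
    (fun jk hjk => by positivity)
    (fun jk hjk => by positivity)
    (fun jk hjk => by
      have h1 : (0:ℝ) < w jk := lt_of_lt_of_le one_pos (hwpos jk hjk)
      rw [← mul_assoc, ← Real.rpow_add h1, neg_add_cancel, Real.rpow_zero, one_mul])
  -- bound the weight sum
  set I : Finset ℤ := (Finset.Icc (-N) N).erase 0 with hI
  set q : ℤ → ℝ := fun a => |(a:ℝ)| ^ (-s) with hq
  set φ : ℤ × ℤ → ℤ × ℤ := fun jk => (2 * jk.1 - jk.2, 2 * jk.1 + jk.2) with hφ
  have hfq : ∀ jk ∈ S, (w jk) ^ (-s) = q (φ jk).1 * q (φ jk).2 := by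
    intro jk _
    have h1 : w jk = |((2*jk.1 - jk.2 : ℤ):ℝ)| * |((2*jk.1 + jk.2 : ℤ):ℝ)| := by
      rw [hw]
      have h2 : (4*(jk.1:ℝ)^2 - (jk.2:ℝ)^2) =
          (2*(jk.1:ℝ) - (jk.2:ℝ)) * (2*(jk.1:ℝ) + (jk.2:ℝ)) := by ring
      push_cast
      rw [h2, abs_mul]
    rw [h1, Real.mul_rpow (abs_nonneg _) (abs_nonneg _)]
  have himem : ∀ jk ∈ S, φ jk ∈ I ×ˢ I := by
    intro jk hjk
    rw [hS, Finset.mem_filter, Finset.mem_filter] at hjk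
    have hle := hcond jk hjk.1.2
    have hne := hjk.2
    have t1 : |2 * jk.1 - jk.2| ≤ 2 * |jk.1| + |jk.2| := by
      calc |2 * jk.1 - jk.2| ≤ |2 * jk.1| + |jk.2| := abs_sub _ _
        _ = 2 * |jk.1| + |jk.2| := by rw [abs_mul]; norm_num
    have t2 : |2 * jk.1 + jk.2| ≤ 2 * |jk.1| + |jk.2| := by
      calc |2 * jk.1 + jk.2| ≤ |2 * jk.1| + |jk.2| := abs_add_le _ _
        _ = 2 * |jk.1| + |jk.2| := by rw [abs_mul]; norm_num
    have ha : |2 * jk.1 - jk.2| ≤ N := le_trans t1 hle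
    have hb : |2 * jk.1 + jk.2| ≤ N := le_trans t2 hle
    rw [Finset.mem_product, hI]
    constructor
    · rw [Finset.mem_erase, Finset.mem_Icc]
      exact ⟨by simp only [hφ]; omega, (abs_le.mp ha).1, (abs_le.mp ha).2⟩
    · rw [Finset.mem_erase, Finset.mem_Icc]
      exact ⟨by simp only [hφ]; omega, (abs_le.mp hb).1, (abs_le.mp hb).2⟩
  have hinj : ∀ jk ∈ S, ∀ jk' ∈ S, φ jk = φ jk' → jk = jk' := by
    intro jk _ jk' _ h
    rw [hφ, Prod.mk.injEq] at h
    rw [Prod.ext_iff]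
    omega
  have hIbound : ∑ a ∈ I, q a ≤ 2 * (A ^ (1-s) / (1-s)) := by
    have haux := stmt19_aux2 s hs0 hs1 M
    rw [hMN] at haux
    have h1 : ((M:ℕ):ℝ) ^ (1-s) ≤ A ^ (1-s) := by
      apply Real.rpow_le_rpow (Nat.cast_nonneg M) _ hp.le
      have : ((M:ℕ):ℝ) = ((N:ℤ):ℝ) := by exact_mod_cast congrArg (Int.cast : ℤ → ℝ) hMN
      rw [this]; exact hNA
    calc ∑ a ∈ I, q a ≤ 2 * (((M:ℕ):ℝ) ^ (1-s) / (1-s)) := haux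
      _ ≤ 2 * (A ^ (1-s) / (1-s)) := by gcongr
  have hB1 : ∑ jk ∈ S, (w jk) ^ (-s) ≤
      (2 * (A ^ (1-s) / (1-s))) * (2 * (A ^ (1-s) / (1-s))) := by
    calc ∑ jk ∈ S, (w jk) ^ (-s)
        = ∑ jk ∈ S, q (φ jk).1 * q (φ jk).2 := Finset.sum_congr rfl hfq
      _ = ∑ p ∈ S.image φ, q p.1 * q p.2 := (Finset.sum_image (f := fun p : ℤ × ℤ => q p.1 * q p.2) hinj).symm
      _ ≤ ∑ p ∈ I ×ˢ I, q p.1 * q p.2 :=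
          Finset.sum_le_sum_of_subset_of_nonneg
            (Finset.image_subset_iff.mpr himem) (fun p _ _ => by positivity)
      _ = (∑ a ∈ I, q a) * (∑ a ∈ I, q a) := by
          rw [Finset.sum_product]
          exact (Finset.sum_mul_sum I I q q).symm
      _ ≤ (2 * (A ^ (1-s) / (1-s))) * (2 * (A ^ (1-s) / (1-s))) := by
          have hqnn : 0 ≤ ∑ a ∈ I, q a := Finset.sum_nonneg (fun a _ => by positivity)
          exact mul_le_mul hIbound hIbound hqnn (by positivity)
  have hB2 : ∑ jk ∈ S, (w jk) ^ s * ‖fhat jk‖ ^ 2 ≤ E := by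
    rw [hE]
    exact Summable.sum_le_tsum S (fun jk _ => by positivity) hsum
  -- assemble
  set K : ℝ := 2 * (A ^ (1-s) / (1-s)) with hK
  have hK0 : 0 ≤ K := by rw [hK]; positivity
  have hE12 : (E ^ (1/2:ℝ)) ^ 2 = E := by
    rw [← Real.rpow_natCast (E ^ (1/2:ℝ)) 2, ← Real.rpow_mul hE0]
    norm_num
  have hfinal : ∑ jk ∈ S, ‖fhat jk‖ ≤ K * E ^ (1/2:ℝ) := by
    have hgnn : 0 ≤ ∑ jk ∈ S, (w jk) ^ s * ‖fhat jk‖ ^ 2 :=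
      Finset.sum_nonneg (fun jk _ => by positivity)
    have hsq : (∑ jk ∈ S, ‖fhat jk‖) ^ 2 ≤ (K * E ^ (1/2:ℝ)) ^ 2 := by
      calc (∑ jk ∈ S, ‖fhat jk‖) ^ 2
          ≤ (∑ jk ∈ S, (w jk) ^ (-s)) * (∑ jk ∈ S, (w jk) ^ s * ‖fhat jk‖ ^ 2) := hCS
        _ ≤ (K * K) * E := mul_le_mul hB1 hB2 hgnn (by positivity)
        _ = (K * E ^ (1/2:ℝ)) ^ 2 := by rw [mul_pow, hE12]; ring
    exact (pow_le_pow_iff_left₀ (Finset.sum_nonneg (fun jk _ => norm_nonneg _))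
      (by positivity) (two_ne_zero)).mp hsq
  calc ‖∑ jk ∈ T,
      (if ((2 * |jk.1| + |jk.2| : ℤ) : ℝ) ≤ A then fhat jk else 0) *
        Complex.exp (Complex.I * ((2 * (jk.1 : ℝ) * x + (jk.2 : ℝ) * t : ℝ) : ℂ))‖
      ≤ ∑ jk ∈ S, ‖fhat jk‖ := hstep1
    _ ≤ K * E ^ (1/2:ℝ) := hfinal
    _ = 2/(1-s) * E ^ (1/2:ℝ) * A ^ (1-s) := by rw [hK]; ring
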